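/- Let A : [0,1] → Sp(2n,ℝ) be a differentiable path satisfying A'(t) = J Q(t) A(t) with each Q(t) symmetric, and let B ∈ Sp(2n,ℝ). Then the path C(t) = A(t) B⁻¹ A(t) B satisfies C'(t) = J (Q(t) + (B A(t)⁻¹)^T Q(t) (B A(t)⁻¹)) C(t); in particular, if each Q(t) is positive semidefinite, then C is a semipositive path. -/

import Mathlib

open Matrix Set

/-- The standard complex structure on ℝ^{2n}, as a block matrix. -/
noncomputable def stdJ (n : ℕ) : Matrix (Fin n ⊕ Fin n) (Fin n ⊕ Fin n) ℝ :=
  Matrix.fromBlocks 0 (-1) 1 0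

lemma stdJ_mul_stdJ (n : ℕ) : stdJ n * stdJ n = -1 := by
  simp [stdJ, Matrix.fromBlocks_multiply, ← Matrix.fromBlocks_one, Matrix.fromBlocks_neg]

lemma stdJ_transpose (n : ℕ) : (stdJ n)ᵀ = -(stdJ n) := by
  simp [stdJ, Matrix.fromBlocks_transpose, Matrix.fromBlocks_neg]

-- symplectic facts
variable {n : ℕ}

lemma symp_left_inv {S : Matrix (Fin n ⊕ Fin n) (Fin n ⊕ Fin n) ℝ}
    (h : Sᵀ * stdJ n * S = stdJ n) : (-(stdJ n * Sᵀ * stdJ n)) * S = 1 := by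
  have : stdJ n * (Sᵀ * stdJ n * S) = stdJ n * stdJ n := by rw [h]
  rw [stdJ_mul_stdJ] at this
  calc (-(stdJ n * Sᵀ * stdJ n)) * S = -(stdJ n * (Sᵀ * stdJ n * S)) := by
        noncomm_ring
    _ = 1 := by rw [this]; simp

lemma symp_inv {S : Matrix (Fin n ⊕ Fin n) (Fin n ⊕ Fin n) ℝ}
    (h : Sᵀ * stdJ n * S = stdJ n) : S⁻¹ = -(stdJ n * Sᵀ * stdJ n) :=
  Matrix.inv_eq_left_inv (symp_left_inv h)

lemma symp_inv_mul {S : Matrix (Fin n ⊕ Fin n) (Fin n ⊕ Fin n) ℝ}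
    (h : Sᵀ * stdJ n * S = stdJ n) : S⁻¹ * S = 1 := by
  rw [symp_inv h]; exact symp_left_inv h

lemma symp_mul_inv {S : Matrix (Fin n ⊕ Fin n) (Fin n ⊕ Fin n) ℝ}
    (h : Sᵀ * stdJ n * S = stdJ n) : S * S⁻¹ = 1 :=
  mul_eq_one_comm.mp (symp_inv_mul h)

lemma symp_inv_J {S : Matrix (Fin n ⊕ Fin n) (Fin n ⊕ Fin n) ℝ}
    (h : Sᵀ * stdJ n * S = stdJ n) : S⁻¹ * stdJ n = stdJ n * Sᵀ := by
  rw [symp_inv h]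
  calc -(stdJ n * Sᵀ * stdJ n) * stdJ n = -(stdJ n * Sᵀ * (stdJ n * stdJ n)) := by
        noncomm_ring
    _ = stdJ n * Sᵀ := by rw [stdJ_mul_stdJ]; simp

lemma symp_J_invT {S : Matrix (Fin n ⊕ Fin n) (Fin n ⊕ Fin n) ℝ}
    (h : Sᵀ * stdJ n * S = stdJ n) : stdJ n * (S⁻¹)ᵀ = S * stdJ n := by
  have := congrArg Matrix.transpose (symp_inv_J h)
  simp only [Matrix.transpose_mul, Matrix.transpose_transpose, stdJ_transpose] at this
  -- this : (-(stdJ n)) * (S⁻¹)ᵀ = S * (-(stdJ n)) ??? check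
  have h2 : -(stdJ n * (S⁻¹)ᵀ) = -(S * stdJ n) := by
    calc -(stdJ n * (S⁻¹)ᵀ) = (stdJ n)ᵀ * (S⁻¹)ᵀ := by rw [stdJ_transpose]; noncomm_ring
      _ = (S⁻¹ * stdJ n)ᵀ := by rw [Matrix.transpose_mul]
      _ = (stdJ n * Sᵀ)ᵀ := by rw [symp_inv_J h]
      _ = S * (stdJ n)ᵀ := by rw [Matrix.transpose_mul, Matrix.transpose_transpose]
      _ = -(S * stdJ n) := by rw [stdJ_transpose]; noncomm_ring
  have := congrArg Neg.neg h2
  simpa using this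

lemma sum3_rev {m : Type*} [Fintype m] (f : m → m → m → ℝ) :
    ∑ a, ∑ b, ∑ c, f a b c = ∑ c, ∑ b, ∑ a, f a b c := by
  calc ∑ a, ∑ b, ∑ c, f a b c
      = ∑ a, ∑ c, ∑ b, f a b c := Finset.sum_congr rfl fun a _ => Finset.sum_comm
    _ = ∑ c, ∑ a, ∑ b, f a b c := Finset.sum_comm
    _ = ∑ c, ∑ b, ∑ a, f a b c := Finset.sum_congr rfl fun c _ => Finset.sum_comm

lemma hasDerivAt_quad {m : Type*} [Fintype m] [DecidableEq m]
    (A : ℝ → Matrix m m ℝ) (A' M N : Matrix m m ℝ) (t : ℝ)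
    (hA : ∀ i j, HasDerivAt (fun s => A s i j) (A' i j) t) (i j : m) :
    HasDerivAt (fun s => (A s * M * A s * N) i j)
      ((A' * M * A t * N + A t * M * A' * N) i j) t := by
  have hrw : ∀ (X : Matrix m m ℝ), (X * M * A t * N + A t * M * X * N) i j =
      ∑ p, ∑ l, ∑ k, (X i k * M k l * A t l p + A t i k * M k l * X l p) * N p j := by
    intro X
    simp only [Matrix.add_apply, Matrix.mul_apply, Finset.sum_mul, Finset.mul_sum,
      Finset.sum_add_distrib, add_mul, mul_assoc]
    congr 1
    · rw [sum3_rev]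
    · rw [sum3_rev]
  have hrw2 : ∀ s, (A s * M * A s * N) i j =
      ∑ p, ∑ l, ∑ k, A s i k * M k l * A s l p * N p j := by
    intro s
    simp only [Matrix.mul_apply, Finset.sum_mul, Finset.mul_sum, mul_assoc]
    exact Finset.sum_congr rfl fun p _ => Finset.sum_comm
  have hfun : (fun s => (A s * M * A s * N) i j)
      = fun s => ∑ p, ∑ l, ∑ k, A s i k * M k l * A s l p * N p j := funext hrw2
  rw [hfun, hrw]
  refine HasDerivAt.fun_sum fun p _ => HasDerivAt.fun_sum fun l _ => HasDerivAt.fun_sum fun k _ => ?_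
  have h := (((hA i k).mul_const (M k l)).fun_mul (hA l p)).mul_const (N p j)
  convert h using 1

/-- If `A(t)` is a differentiable path of symplectic matrices with
`A'(t) = J Q(t) A(t)`, `Q(t)` symmetric, and `B` is symplectic, then
`C(t) = A(t) B⁻¹ A(t) B` satisfies
`C'(t) = J (Q(t) + (B A(t)⁻¹)ᵀ Q(t) (B A(t)⁻¹)) C(t)`;
in particular if each `Q(t)` is positive semidefinite then `C` is a
semipositive path. -/
theorem composite_path_semipositive (n : ℕ)
    (A Q : ℝ → Matrix (Fin n ⊕ Fin n) (Fin n ⊕ Fin n) ℝ)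
    (B : Matrix (Fin n ⊕ Fin n) (Fin n ⊕ Fin n) ℝ)
    (hA_symp : ∀ t ∈ Icc (0:ℝ) 1, (A t)ᵀ * stdJ n * A t = stdJ n)
    (hB_symp : Bᵀ * stdJ n * B = stdJ n)
    (hQ_symm : ∀ t ∈ Icc (0:ℝ) 1, (Q t)ᵀ = Q t)
    (hA' : ∀ t ∈ Icc (0:ℝ) 1, ∀ i j,
      HasDerivAt (fun s => A s i j) ((stdJ n * Q t * A t) i j) t) :
    (∀ t ∈ Icc (0:ℝ) 1, ∀ i j,
        HasDerivAt (fun s => (A s * B⁻¹ * A s * B) i j)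
          ((stdJ n * (Q t + (B * (A t)⁻¹)ᵀ * Q t * (B * (A t)⁻¹)) *
            (A t * B⁻¹ * A t * B)) i j) t) ∧
      ((∀ t ∈ Icc (0:ℝ) 1, (Q t).PosSemidef) →
        ∀ t ∈ Icc (0:ℝ) 1,
          (Q t + (B * (A t)⁻¹)ᵀ * Q t * (B * (A t)⁻¹)).PosSemidef) := by
  constructor
  · intro t ht i j
    have hAinv : (A t)⁻¹ * A t = 1 := symp_inv_mul (hA_symp t ht)
    have hBB : B * B⁻¹ = 1 := symp_mul_inv hB_symp
    have h1 : stdJ n * ((A t)⁻¹)ᵀ = A t * stdJ n := symp_J_invT (hA_symp t ht)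
    have h2 : B⁻¹ * stdJ n = stdJ n * Bᵀ := symp_inv_J hB_symp
    have e2 : stdJ n * ((B * (A t)⁻¹)ᵀ * Q t * (B * (A t)⁻¹)) * (A t * B⁻¹ * A t * B)
        = A t * B⁻¹ * (stdJ n * Q t * A t) * B := by
      rw [Matrix.transpose_mul]
      calc stdJ n * (((A t)⁻¹)ᵀ * Bᵀ * Q t * (B * (A t)⁻¹)) * (A t * B⁻¹ * A t * B)
          = (stdJ n * ((A t)⁻¹)ᵀ) * (Bᵀ * Q t * B) *
              (((A t)⁻¹ * A t) * (B⁻¹ * A t * B)) := by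
            simp only [Matrix.mul_assoc]
        _ = (A t * stdJ n) * (Bᵀ * Q t * B) * (B⁻¹ * A t * B) := by
            rw [h1, hAinv, Matrix.one_mul]
        _ = A t * ((stdJ n * Bᵀ) * Q t) * ((B * B⁻¹) * (A t * B)) := by
            simp only [Matrix.mul_assoc]
        _ = A t * ((B⁻¹ * stdJ n) * Q t) * (A t * B) := by
            rw [← h2, hBB, Matrix.one_mul]
        _ = A t * B⁻¹ * (stdJ n * Q t * A t) * B := by
            simp only [Matrix.mul_assoc]
    have key : stdJ n * (Q t + (B * (A t)⁻¹)ᵀ * Q t * (B * (A t)⁻¹)) *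
          (A t * B⁻¹ * A t * B)
        = (stdJ n * Q t * A t) * B⁻¹ * A t * B
          + A t * B⁻¹ * (stdJ n * Q t * A t) * B := by
      rw [Matrix.mul_add, Matrix.add_mul, e2]
      congr 1
      simp only [Matrix.mul_assoc]
    rw [key]
    exact hasDerivAt_quad A (stdJ n * Q t * A t) B⁻¹ B t (hA' t ht) i j
  · intro hQ t ht
    have h1 := hQ t ht
    have h2 : ((B * (A t)⁻¹)ᵀ * Q t * (B * (A t)⁻¹)).PosSemidef := by
      have := h1.conjTranspose_mul_mul_same (B * (A t)⁻¹)
      simpa [Matrix.conjTranspose_eq_transpose_of_trivial] using this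
    exact h1.add h2
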